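/- Let A and R be unital rings, φ, ψ : A → R ring homomorphisms, n ≥ 1, and u ∈ GLₙ(R) such that conjugation by u carries the block-diagonal embedding ιₙφ to ιₙψ, i.e. u · diag(φ(a),0,…,0) · u⁻¹ = diag(ψ(a),0,…,0) for all a ∈ A. Then there exist x, y ∈ R with x φ(a) y = ψ(a), φ(a) y x φ(a') = φ(a a'), for all a, a' ∈ A. If moreover φ and ψ are unital, then x can be chosen invertible with y = x⁻¹. -/

import Mathlib

private lemma stmt7_aux {R : Type*} [Ring R] {n : ℕ} (i0 : Fin n) (c : R)
    (M N : Matrix (Fin n) (Fin n) R) (p q : Fin n) :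
    (M * Matrix.single i0 i0 c * N) p q = M p i0 * c * N i0 q := by
  rw [Matrix.mul_apply]
  rw [Finset.sum_eq_single i0]
  · rw [Matrix.mul_single_apply_same]
  · intro j _ hj
    rw [Matrix.mul_single_apply_of_ne _ _ _ _ _ hj, zero_mul]
  · intro habs; exact absurd (Finset.mem_univ i0) habs

/-- Let `A`, `R` be unital rings, `φ, ψ : A → R` (not necessarily unital) ring
homomorphisms, `n ≥ 1` and `u ∈ GLₙ(R)` such that conjugation by `u` carries the
corner embedding `ιₙφ` to `ιₙψ`.  Then there are `x, y ∈ R` with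
`x φ(a) y = ψ(a)` and `φ(a) y x φ(a') = φ(a a')` for all `a, a'`.  If moreover
`φ` and `ψ` are unital, then one may take `x` invertible and `y = x⁻¹`. -/
theorem stmt7 (A R : Type*) [Ring A] [Ring R] (φ ψ : A →ₙ+* R)
    (n : ℕ) (hn : 0 < n) (u : (Matrix (Fin n) (Fin n) R)ˣ)
    (h : ∀ a : A,
      u.val * Matrix.single ⟨0, hn⟩ ⟨0, hn⟩ (φ a) * (u⁻¹).val =
        Matrix.single ⟨0, hn⟩ ⟨0, hn⟩ (ψ a)) :
    (∃ x y : R, (∀ a : A, x * φ a * y = ψ a) ∧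
      (∀ a a' : A, φ a * y * x * φ a' = φ (a * a'))) ∧
    ((φ 1 = 1 ∧ ψ 1 = 1) →
      ∃ v : Rˣ, ∀ a : A, v.val * φ a * (v⁻¹).val = ψ a) := by
  have i0 : Fin n := ⟨0, hn⟩
  -- first relation
  have hxy : ∀ a : A,
      u.val ⟨0, hn⟩ ⟨0, hn⟩ * φ a * (u⁻¹).val ⟨0, hn⟩ ⟨0, hn⟩ = ψ a := by
    intro a
    have := congrFun (congrFun (h a) ⟨0, hn⟩) ⟨0, hn⟩
    rwa [stmt7_aux, Matrix.single_apply_same] at this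
  -- commutation through u⁻¹
  have hcomm : ∀ a : A, Matrix.single ⟨0, hn⟩ ⟨0, hn⟩ (φ a) * (u⁻¹).val =
      (u⁻¹).val * Matrix.single ⟨0, hn⟩ ⟨0, hn⟩ (ψ a) := by
    intro a
    calc Matrix.single ⟨0, hn⟩ ⟨0, hn⟩ (φ a) * (u⁻¹).val
        = (u⁻¹).val * (u.val * Matrix.single ⟨0, hn⟩ ⟨0, hn⟩ (φ a) * (u⁻¹).val) := by
          rw [← mul_assoc, ← mul_assoc, Units.inv_mul, one_mul]
      _ = (u⁻¹).val * Matrix.single ⟨0, hn⟩ ⟨0, hn⟩ (ψ a) := by rw [h a]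
  -- off-diagonal vanishing
  have hvan : ∀ (a : A) (j : Fin n), j ≠ ⟨0, hn⟩ → φ a * (u⁻¹).val ⟨0, hn⟩ j = 0 := by
    intro a j hj
    have := congrFun (congrFun (hcomm a) ⟨0, hn⟩) j
    rwa [Matrix.single_mul_apply_same,
      Matrix.mul_single_apply_of_ne _ _ _ _ _ hj] at this
  -- second relation
  have hsecond : ∀ a a' : A,
      φ a * (u⁻¹).val ⟨0, hn⟩ ⟨0, hn⟩ * u.val ⟨0, hn⟩ ⟨0, hn⟩ * φ a' = φ (a * a') := by
    intro a a'
    have hone : ((u⁻¹).val * u.val) ⟨0, hn⟩ ⟨0, hn⟩ = 1 := by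
      rw [Units.inv_mul]; exact Matrix.one_apply_eq _
    have key : φ a * ((u⁻¹).val * u.val) ⟨0, hn⟩ ⟨0, hn⟩ * φ a' = φ (a * a') := by
      rw [hone, mul_one, map_mul]
    rw [← key, Matrix.mul_apply, Finset.mul_sum, Finset.sum_mul]
    rw [Finset.sum_eq_single (⟨0, hn⟩ : Fin n)]
    · simp only [mul_assoc]
    · intro j _ hj
      rw [← mul_assoc, hvan a j hj, zero_mul, zero_mul]
    · intro habs; exact absurd (Finset.mem_univ _) habs
  refine ⟨⟨_, _, hxy, hsecond⟩, ?_⟩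
  rintro ⟨hφ1, hψ1⟩
  have hxy1 : u.val ⟨0, hn⟩ ⟨0, hn⟩ * (u⁻¹).val ⟨0, hn⟩ ⟨0, hn⟩ = 1 := by
    have := hxy 1; rwa [hφ1, hψ1, mul_one] at this
  have hyx1 : (u⁻¹).val ⟨0, hn⟩ ⟨0, hn⟩ * u.val ⟨0, hn⟩ ⟨0, hn⟩ = 1 := by
    have := hsecond 1 1
    rw [show ((1:A) * 1) = 1 from mul_one 1, hφ1, one_mul, mul_one] at this
    exact this
  exact ⟨⟨_, _, hxy1, hyx1⟩, fun a => hxy a⟩
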